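/- Let a, b ∈ L^∞(ℝ) and let ν > 0. With e_μ(t) := e^{iμt}, the following operator identity holds on L²(ℝ⁺): W(a) + H(b) = (W(a·e_{−ν/2}) + H(b·e_{ν/2})) ∘ W(e_{ν/2}). -/

import Mathlib

open MeasureTheory Complex Filter Set

noncomputable section

namespace WienerHopf

/-- The space `L²(ℝ;ℂ)`. -/
abbrev L2 : Type := Lp ℂ 2 (volume : Measure ℝ)

open Classical in
/-- Multiplication by a function `a : ℝ → ℂ`, as a bounded operator on `L²(ℝ)`.
(It is defined to be `0` in the degenerate case where `a` is not essentially bounded.) -/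
def mul (a : ℝ → ℂ) : L2 →L[ℂ] L2 :=
  if h : MemLp a ⊤ (volume : Measure ℝ) then
    LinearMap.mkContinuous
      { toFun := fun f => ((Lp.memLp f).smul (p := ⊤) (r := 2) h).toLp (a • (f : ℝ → ℂ))
        map_add' := by
          intro f g
          rw [← MemLp.toLp_add]
          apply Lp.ext
          filter_upwards [MemLp.coeFn_toLp ((Lp.memLp (f + g)).smul (p := ⊤) (r := 2) h),
            MemLp.coeFn_toLp (((Lp.memLp f).smul (p := ⊤) (r := 2) h).add
              ((Lp.memLp g).smul (p := ⊤) (r := 2) h)),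
            Lp.coeFn_add f g] with t h1 h2 h3
          rw [h1, h2]
          simp only [Pi.smul_apply, smul_eq_mul, Pi.mul_apply, Pi.add_apply]
          rw [h3]
          simp [Pi.add_apply, mul_add]
        map_smul' := by
          intro m f
          simp only [RingHom.id_apply]
          rw [← MemLp.toLp_const_smul]
          apply Lp.ext
          filter_upwards [MemLp.coeFn_toLp ((Lp.memLp (m • f)).smul (p := ⊤) (r := 2) h),
            MemLp.coeFn_toLp (((Lp.memLp f).smul (p := ⊤) (r := 2) h).const_smul m),
            Lp.coeFn_smul m f] with t h1 h2 h3
          rw [h1, h2]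
          simp only [Pi.smul_apply, smul_eq_mul, Pi.mul_apply]
          rw [h3]
          simp only [Pi.smul_apply, smul_eq_mul]
          ring
        }
      (eLpNorm a ⊤ (volume : Measure ℝ)).toReal
      (by
        intro f
        simp only [LinearMap.coe_mk, AddHom.coe_mk]
        rw [Lp.norm_toLp, Lp.norm_def]
        have hle := eLpNorm_smul_le_mul_eLpNorm (Lp.aestronglyMeasurable f) h.1
          (p := ⊤) (q := 2) (r := 2)
        calc (eLpNorm (a • (f : ℝ → ℂ)) 2 (volume : Measure ℝ)).toReal
            ≤ (eLpNorm a ⊤ (volume : Measure ℝ) * eLpNorm (f : ℝ → ℂ) 2 volume).toReal := by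
              apply ENNReal.toReal_mono _ hle
              exact ENNReal.mul_ne_top h.2.ne (Lp.eLpNorm_lt_top f).ne
          _ = (eLpNorm a ⊤ (volume : Measure ℝ)).toReal *
              (eLpNorm (f : ℝ → ℂ) 2 (volume : Measure ℝ)).toReal := ENNReal.toReal_mul)
  else 0

theorem mul_coeFn {a : ℝ → ℂ} (h : MemLp a ⊤ (volume : Measure ℝ)) (f : L2) :
    (mul a f : ℝ → ℂ) =ᵐ[volume] fun t => a t * f t := by
  rw [mul, dif_pos h]
  show ⇑(((Lp.memLp f).smul (p := ⊤) (r := 2) h).toLp (a • (f : ℝ → ℂ))) =ᵐ[volume]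
    fun t => a t * f t
  exact (MemLp.coeFn_toLp _).trans
    (Eventually.of_forall fun t => by simp [Pi.smul_apply])

/-- `(-t)`-reflection is measure preserving. -/
theorem negMP : MeasurePreserving (fun t : ℝ => -t) volume volume :=
  Measure.measurePreserving_neg (volume : Measure ℝ)

/-- The reflection operator `(Jφ)(t) = φ(-t)` on `L²(ℝ)`. -/
def reflect : L2 →L[ℂ] L2 :=
  LinearMap.mkContinuous
    { toFun := ⇑(Lp.compMeasurePreserving (fun t : ℝ => -t) negMP)
      map_add' := fun f g => map_add _ f g
      map_smul' := by
        intro m g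
        simp only [RingHom.id_apply]
        apply Lp.ext
        filter_upwards [Lp.coeFn_compMeasurePreserving (f := fun t : ℝ => -t) (m • g) negMP,
          Lp.coeFn_smul m (Lp.compMeasurePreserving (fun t : ℝ => -t) negMP g),
          Lp.coeFn_compMeasurePreserving (f := fun t : ℝ => -t) g negMP,
          negMP.quasiMeasurePreserving.ae_eq_comp (Lp.coeFn_smul m g)] with t h1 h2 h3 h4
        rw [h1, h2, h4]
        simp only [Function.comp_apply, Pi.smul_apply, smul_eq_mul]
        rw [h3]
        simp only [Function.comp_apply]
      }
    1
    (by
      intro g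
      rw [one_mul]
      exact le_of_eq (Lp.norm_compMeasurePreserving g _))

theorem reflect_coeFn (g : L2) :
    (reflect g : ℝ → ℂ) =ᵐ[volume] fun t => g (-t) :=
  Lp.coeFn_compMeasurePreserving (f := fun t : ℝ => -t) g negMP

/-- The indicator function of `(0,∞)`. -/
def chiPlus : ℝ → ℂ := Set.indicator (Set.Ioi (0 : ℝ)) (fun _ => 1)

theorem chiPlus_memℒp : MemLp chiPlus ⊤ (volume : Measure ℝ) :=
  (memLp_top_const (1 : ℂ)).indicator measurableSet_Ioi

/-- The subspace of `L²(ℝ)` consisting of functions vanishing a.e. on `(-∞,0)`;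
it is identified with `L²(ℝ⁺)`. -/
def posSubspace : Submodule ℂ L2 where
  carrier := {f : L2 | ∀ᵐ t : ℝ ∂volume, t < 0 → (f : ℝ → ℂ) t = 0}
  zero_mem' := by
    filter_upwards [Lp.coeFn_zero ℂ 2 (volume : Measure ℝ)] with t ht _
    simp [ht]
  add_mem' := by
    intro f g hf hg
    filter_upwards [hf, hg, Lp.coeFn_add f g] with t h1 h2 h3 hlt
    rw [h3]
    simp [Pi.add_apply, h1 hlt, h2 hlt]
  smul_mem' := by
    intro m f hf
    filter_upwards [hf, Lp.coeFn_smul m f] with t h1 h2 hlt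
    rw [h2]
    simp [Pi.smul_apply, h1 hlt]

/-- `L²(ℝ⁺)`, realized as the subspace of `L²(ℝ)` of functions vanishing a.e. on `(-∞,0)`. -/
abbrev Lp2Plus : Type := ↥posSubspace

theorem chiPlus_mul_mem (g : L2) : mul chiPlus g ∈ posSubspace := by
  filter_upwards [mul_coeFn chiPlus_memℒp g] with t ht hlt
  rw [ht, chiPlus, Set.indicator_of_notMem (by simpa using hlt.le), zero_mul]

/-- Compression of an operator on `L²(ℝ)` to the subspace `L²(ℝ⁺)`:
`φ ↦ χ₊ ⬝ (T φ)`. -/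
def compress (T : L2 →L[ℂ] L2) : Lp2Plus →L[ℂ] Lp2Plus :=
  LinearMap.mkContinuous
    { toFun := fun φ => ⟨mul chiPlus (T φ.val), chiPlus_mul_mem _⟩
      map_add' := by intro φ ψ; apply Subtype.ext; simp
      map_smul' := by intro m φ; apply Subtype.ext; simp }
    ‖(mul chiPlus).comp T‖
    (by intro φ; exact ((mul chiPlus).comp T).le_opNorm φ.val)

theorem compress_coe (T : L2 →L[ℂ] L2) (φ : Lp2Plus) :
    (compress T φ : L2) = mul chiPlus (T φ.val) := rfl

/-- An abstract realization of the Fourier transform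
`(𝓕φ)(ξ) = ∫ e^{iξx} φ(x) dx` on `L²(ℝ)` (together with its inverse
`(𝓕⁻¹ψ)(x) = (2π)⁻¹ ∫ e^{-iξx} ψ(ξ) dξ`): a continuous linear bijection of `L²(ℝ)`
that is given by the above integral formulas on integrable functions.  By density
of `L¹ ∩ L²` in `L²`, these properties determine the operator uniquely, and by the
Fourier–Plancherel theory such an operator exists. -/
structure FourierL2 where
  equiv : L2 ≃L[ℂ] L2
  forward : ∀ φ : L2, Integrable (φ : ℝ → ℂ) volume →
      (equiv φ : ℝ → ℂ) =ᵐ[volume]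
        fun ξ : ℝ => ∫ x : ℝ, Complex.exp (Complex.I * ξ * x) * φ x
  inverse : ∀ ψ : L2, Integrable (ψ : ℝ → ℂ) volume →
      (equiv.symm ψ : ℝ → ℂ) =ᵐ[volume]
        fun x : ℝ => (2 * Real.pi : ℂ)⁻¹ * ∫ ξ : ℝ, Complex.exp (-(Complex.I * ξ * x)) * ψ ξ

/-- `W⁰(a) = 𝓕⁻¹ M_a 𝓕`, the convolution (Fourier multiplier) operator on `L²(ℝ)`. -/
def W0 (F : FourierL2) (a : ℝ → ℂ) : L2 →L[ℂ] L2 :=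
  (F.equiv.symm : L2 →L[ℂ] L2).comp ((mul a).comp (F.equiv : L2 →L[ℂ] L2))

/-- The Wiener–Hopf operator `W(a) = χ₊ W⁰(a)` on `L²(ℝ⁺)`. -/
def W (F : FourierL2) (a : ℝ → ℂ) : Lp2Plus →L[ℂ] Lp2Plus :=
  compress (W0 F a)

/-- The Hankel operator `H(b) = χ₊ W⁰(b) J` on `L²(ℝ⁺)`. -/
def H (F : FourierL2) (b : ℝ → ℂ) : Lp2Plus →L[ℂ] Lp2Plus :=
  compress ((W0 F b).comp reflect)

/-- `a` is invertible in the Banach algebra `L^∞(ℝ)`: `a ∈ L^∞`, `a ≠ 0` a.e.,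
and the pointwise inverse `a⁻¹` again belongs to `L^∞`. -/
def InvertibleLinf (a : ℝ → ℂ) : Prop :=
  MemLp a ⊤ (volume : Measure ℝ) ∧ (∀ᵐ t : ℝ ∂volume, a t ≠ 0) ∧
    MemLp (fun t => (a t)⁻¹) ⊤ (volume : Measure ℝ)

/-- `(a,b)` is a matching pair: `a, b` are invertible in `L^∞(ℝ)` and
`a(t)a(-t) = b(t)b(-t)` for a.e. `t`. -/
def MatchingPair (a b : ℝ → ℂ) : Prop :=
  InvertibleLinf a ∧ InvertibleLinf b ∧
    ∀ᵐ t : ℝ ∂volume, a t * a (-t) = b t * b (-t)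


/-! ### Auxiliary lemmas for the shift factorization -/

theorem memℒp_exp_I (c : ℝ) :
    MemLp (fun t : ℝ => Complex.exp (Complex.I * c * t)) ⊤ (volume : Measure ℝ) := by
  refine memLp_top_of_bound ?_ 1 (Eventually.of_forall fun t => ?_)
  · exact (Complex.continuous_exp.comp
      (continuous_const.mul Complex.continuous_ofReal)).aestronglyMeasurable
  · rw [Complex.norm_exp]
    simp [Complex.mul_re, Complex.mul_im]

theorem mul_mul (p q : ℝ → ℂ) (hp : MemLp p ⊤ (volume : Measure ℝ))
    (hq : MemLp q ⊤ (volume : Measure ℝ)) (f : L2) :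
    mul p (mul q f) = mul (fun t => p t * q t) f := by
  have hpq : MemLp (fun t => p t * q t) ⊤ (volume : Measure ℝ) := by
    have h := hq.smul (p := ⊤) (r := ⊤) hp
    have he : (p • q) = fun t => p t * q t := rfl
    rwa [he] at h
  apply Lp.ext
  filter_upwards [mul_coeFn hp (mul q f), mul_coeFn hq f, mul_coeFn hpq f] with t h1 h2 h3
  rw [h1, h2, h3, mul_assoc]

theorem clm_ext_integrable (S T : L2 →L[ℂ] L2)
    (h : ∀ f : L2, Integrable (f : ℝ → ℂ) volume → S f = T f) : S = T := by
  have hd : DenseRange ((↑) : Lp.simpleFunc ℂ 2 (volume : Measure ℝ) → L2) :=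
    Lp.simpleFunc.denseRange (by norm_num)
  have hco : (⇑S) ∘ ((↑) : Lp.simpleFunc ℂ 2 (volume : Measure ℝ) → L2) = (⇑T) ∘ (↑) := by
    funext s
    refine h _ ?_
    have h1 : MemLp (Lp.simpleFunc.toSimpleFunc s) 2 (volume : Measure ℝ) :=
      Lp.simpleFunc.memLp s
    have h2 : Integrable (Lp.simpleFunc.toSimpleFunc s) volume :=
      (SimpleFunc.memLp_iff_integrable (by norm_num) (by norm_num)).mp h1
    exact h2.congr (Lp.simpleFunc.toSimpleFunc_eq_toFun s)
  exact ContinuousLinearMap.ext fun x =>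
    congrFun (hd.equalizer S.continuous T.continuous hco) x

/-- Composition with a measure preserving map, as a bounded operator on `L²(ℝ)`. -/
def cmp (f : ℝ → ℝ) (hf : MeasurePreserving f volume volume) : L2 →L[ℂ] L2 :=
  LinearMap.mkContinuous
    { toFun := ⇑(Lp.compMeasurePreserving (E := ℂ) (p := 2) f hf)
      map_add' := fun g₁ g₂ => map_add _ g₁ g₂
      map_smul' := by
        intro m g
        simp only [RingHom.id_apply]
        apply Lp.ext
        filter_upwards [Lp.coeFn_compMeasurePreserving (f := f) (m • g) hf,
          Lp.coeFn_smul m (Lp.compMeasurePreserving f hf g),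
          Lp.coeFn_compMeasurePreserving (f := f) g hf,
          hf.quasiMeasurePreserving.ae_eq_comp (Lp.coeFn_smul m g)] with t h1 h2 h3 h4
        rw [h1, h2, h4]
        simp only [Function.comp_apply, Pi.smul_apply, smul_eq_mul]
        rw [h3]
        simp only [Function.comp_apply] }
    1
    (fun g => by
      rw [one_mul]
      exact le_of_eq (Lp.norm_compMeasurePreserving g _))

theorem cmp_coeFn (f : ℝ → ℝ) (hf : MeasurePreserving f volume volume) (g : L2) :
    (cmp f hf g : ℝ → ℂ) =ᵐ[volume] (g : ℝ → ℂ) ∘ f :=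
  Lp.coeFn_compMeasurePreserving g hf

theorem transMP (c : ℝ) : MeasurePreserving (fun x : ℝ => x + c) volume volume :=
  measurePreserving_add_right volume c

/-- Translation `φ ↦ φ(· - c)` as a bounded operator on `L²(ℝ)`. -/
def translate (c : ℝ) : L2 →L[ℂ] L2 := cmp (fun x => x + (-c)) (transMP (-c))

theorem translate_coeFn (c : ℝ) (g : L2) :
    (translate c g : ℝ → ℂ) =ᵐ[volume] (g : ℝ → ℂ) ∘ (fun x => x + (-c)) :=
  cmp_coeFn _ _ g

theorem W0_apply (F : FourierL2) (p : ℝ → ℂ) (f : L2) :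
    W0 F p f = F.equiv.symm (mul p (F.equiv f)) := rfl

theorem W0_W0 (F : FourierL2) {p q : ℝ → ℂ} (hp : MemLp p ⊤ (volume : Measure ℝ))
    (hq : MemLp q ⊤ (volume : Measure ℝ)) (f : L2) :
    W0 F p (W0 F q f) = W0 F (fun t => p t * q t) f := by
  rw [W0_apply, W0_apply, W0_apply, ContinuousLinearEquiv.apply_symm_apply,
    mul_mul p q hp hq]

theorem fourier_reflect (F : FourierL2) :
    (F.equiv : L2 →L[ℂ] L2).comp reflect = reflect.comp (F.equiv : L2 →L[ℂ] L2) := by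
  apply clm_ext_integrable
  intro f hf
  simp only [ContinuousLinearMap.comp_apply, ContinuousLinearEquiv.coe_coe]
  have hrf : Integrable (reflect f : ℝ → ℂ) volume := by
    have h1 : MemLp (f : ℝ → ℂ) 1 volume := memLp_one_iff_integrable.mpr hf
    have h2 : MemLp ((f : ℝ → ℂ) ∘ (fun t : ℝ => -t)) 1 volume :=
      h1.comp_measurePreserving negMP
    exact (memLp_one_iff_integrable.mp h2).congr
      ((reflect_coeFn f).symm.trans (Eventually.of_forall fun t => rfl))
  have h2 := F.forward f hf
  have h3 := F.forward (reflect f) hrf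
  have key : ∀ ξ : ℝ,
      (∫ x : ℝ, Complex.exp (Complex.I * ξ * x) * (reflect f : ℝ → ℂ) x)
        = ∫ x : ℝ, Complex.exp (Complex.I * (-ξ : ℝ) * x) * (f : ℝ → ℂ) x := by
    intro ξ
    have e1 : (∫ x : ℝ, Complex.exp (Complex.I * ξ * x) * (reflect f : ℝ → ℂ) x)
        = ∫ x : ℝ, Complex.exp (Complex.I * ξ * x) * (f : ℝ → ℂ) (-x) :=
      integral_congr_ae (by
        filter_upwards [reflect_coeFn f] with x hx
        rw [hx])
    rw [e1]
    have e2 : (fun x : ℝ => Complex.exp (Complex.I * ξ * x) * (f : ℝ → ℂ) (-x))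
        = fun x : ℝ =>
            (fun y : ℝ => Complex.exp (Complex.I * (-ξ : ℝ) * y) * (f : ℝ → ℂ) y) (-x) := by
      funext x
      simp only
      congr 2
      push_cast
      ring
    rw [e2]
    exact integral_neg_eq_self (fun y : ℝ => Complex.exp (Complex.I * ((-ξ : ℝ) : ℂ) * y) * (f : ℝ → ℂ) y) volume
  apply Lp.ext
  filter_upwards [h3, reflect_coeFn (F.equiv f),
    negMP.quasiMeasurePreserving.ae_eq_comp h2] with ξ k1 k2 k3
  rw [k1, key ξ, k2]
  simpa [Function.comp] using k3.symm

theorem reflect_fourier_symm (F : FourierL2) (ψ : L2) :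
    reflect (F.equiv.symm ψ) = F.equiv.symm (reflect ψ) := by
  have h0 := DFunLike.congr_fun (fourier_reflect F) (F.equiv.symm ψ)
  simp only [ContinuousLinearMap.comp_apply, ContinuousLinearEquiv.coe_coe,
    ContinuousLinearEquiv.apply_symm_apply] at h0
  calc reflect (F.equiv.symm ψ)
      = F.equiv.symm (F.equiv (reflect (F.equiv.symm ψ))) :=
        (F.equiv.symm_apply_apply _).symm
    _ = F.equiv.symm (reflect ψ) := by rw [h0]

theorem reflect_mul {d : ℝ → ℂ} (hd : MemLp d ⊤ (volume : Measure ℝ)) (g : L2) :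
    reflect (mul d g) = mul (fun t => d (-t)) (reflect g) := by
  have hdn : MemLp (fun t : ℝ => d (-t)) ⊤ (volume : Measure ℝ) :=
    hd.comp_measurePreserving negMP
  apply Lp.ext
  filter_upwards [reflect_coeFn (mul d g),
    negMP.quasiMeasurePreserving.ae_eq_comp (mul_coeFn hd g),
    mul_coeFn hdn (reflect g), reflect_coeFn g] with t h1 h2 h3 h4
  rw [h1, h3, h4]
  simpa [Function.comp] using h2

theorem reflect_W0 (F : FourierL2) {d : ℝ → ℂ} (hd : MemLp d ⊤ (volume : Measure ℝ)) (f : L2) :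
    reflect (W0 F d f) = W0 F (fun t => d (-t)) (reflect f) := by
  have h2 := DFunLike.congr_fun (fourier_reflect F) f
  simp only [ContinuousLinearMap.comp_apply, ContinuousLinearEquiv.coe_coe] at h2
  rw [W0_apply, W0_apply, reflect_fourier_symm F, reflect_mul hd, ← h2]

theorem fourier_translate (F : FourierL2) (c : ℝ) :
    (F.equiv : L2 →L[ℂ] L2).comp (translate c) =
      (mul (fun ξ : ℝ => Complex.exp (Complex.I * c * ξ))).comp (F.equiv : L2 →L[ℂ] L2) := by
  apply clm_ext_integrable
  intro f hf
  simp only [ContinuousLinearMap.comp_apply, ContinuousLinearEquiv.coe_coe]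
  have htf : Integrable (translate c f : ℝ → ℂ) volume := by
    have h1 : MemLp (f : ℝ → ℂ) 1 volume := memLp_one_iff_integrable.mpr hf
    have h2 : MemLp ((f : ℝ → ℂ) ∘ (fun x : ℝ => x + (-c))) 1 volume :=
      h1.comp_measurePreserving (transMP (-c))
    exact (memLp_one_iff_integrable.mp h2).congr (translate_coeFn c f).symm
  have h2 := F.forward f hf
  have h3 := F.forward (translate c f) htf
  have key : ∀ ξ : ℝ,
      (∫ x : ℝ, Complex.exp (Complex.I * ξ * x) * (translate c f : ℝ → ℂ) x)
        = Complex.exp (Complex.I * c * ξ) *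
            ∫ x : ℝ, Complex.exp (Complex.I * ξ * x) * (f : ℝ → ℂ) x := by
    intro ξ
    have e1 : (∫ x : ℝ, Complex.exp (Complex.I * ξ * x) * (translate c f : ℝ → ℂ) x)
        = ∫ x : ℝ, Complex.exp (Complex.I * ξ * x) * (f : ℝ → ℂ) (x + (-c)) :=
      integral_congr_ae (by
        filter_upwards [translate_coeFn c f] with x hx
        rw [hx]
        rfl)
    rw [e1,
      ← integral_add_right_eq_self (μ := volume)
        (fun x : ℝ => Complex.exp (Complex.I * ξ * x) * (f : ℝ → ℂ) (x + (-c))) c,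
      ← integral_const_mul]
    refine integral_congr_ae (Eventually.of_forall fun x => ?_)
    simp only
    have hx : x + c + -c = x := by ring
    rw [hx, ← mul_assoc, ← Complex.exp_add]
    congr 2
    push_cast
    ring
  apply Lp.ext
  filter_upwards [h3, mul_coeFn (memℒp_exp_I c) (F.equiv f), h2] with ξ k1 k2 k3
  rw [k1, key ξ, k2, k3]

theorem W0_exp (F : FourierL2) (c : ℝ) :
    W0 F (fun ξ : ℝ => Complex.exp (Complex.I * c * ξ)) = translate c := by
  refine ContinuousLinearMap.ext fun f => ?_
  have h0 := DFunLike.congr_fun (fourier_translate F c) f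
  simp only [ContinuousLinearMap.comp_apply, ContinuousLinearEquiv.coe_coe] at h0
  rw [W0_apply, ← h0, ContinuousLinearEquiv.symm_apply_apply]

theorem mul_chiPlus_eq_self {f : L2} (hf : f ∈ posSubspace) : mul chiPlus f = f := by
  have h0 : ∀ᵐ t : ℝ ∂(volume : Measure ℝ), t ≠ 0 := by
    rw [ae_iff]
    have hs : {t : ℝ | ¬ t ≠ 0} = {(0 : ℝ)} := by ext t; simp
    rw [hs]
    exact measure_singleton 0
  apply Lp.ext
  filter_upwards [mul_coeFn chiPlus_memℒp f, hf, h0] with t h1 h2 h3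
  rw [h1]
  rcases lt_or_gt_of_ne h3 with h | h
  · rw [h2 h, mul_zero]
  · rw [chiPlus, Set.indicator_of_mem (Set.mem_Ioi.mpr h), one_mul]

theorem translate_mem_pos {c : ℝ} (hc : 0 < c) {f : L2} (hf : f ∈ posSubspace) :
    translate c f ∈ posSubspace := by
  have h1 : ∀ᵐ x : ℝ ∂(volume : Measure ℝ),
      (x + -c < 0 → (f : ℝ → ℂ) (x + -c) = 0) :=
    (transMP (-c)).quasiMeasurePreserving.ae hf
  filter_upwards [h1, translate_coeFn c f] with x hx h2 hlt
  rw [h2]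
  exact hx (by linarith)

/-- For `a, b ∈ L^∞(ℝ)` and `ν > 0`:
`W(a) + H(b) = (W(a e^{-iνt/2}) + H(b e^{iνt/2})) W(e^{iνt/2})`. -/
theorem shift_factorization
    (F : FourierL2) (a b : ℝ → ℂ)
    (ha : MemLp a ⊤ (volume : Measure ℝ)) (hb : MemLp b ⊤ (volume : Measure ℝ))
    (ν : ℝ) (hν : 0 < ν) :
    W F a + H F b =
      (W F (fun t => a t * Complex.exp (-(Complex.I * (ν / 2) * t))) +
        H F (fun t => b t * Complex.exp (Complex.I * (ν / 2) * t))).comp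
        (W F (fun t => Complex.exp (Complex.I * (ν / 2) * t))) := by
  set c : ℝ := ν / 2 with hcdef
  have hcpos : 0 < c := by positivity
  have hcast : ((ν : ℂ) / 2) = ((c : ℝ) : ℂ) := by
    rw [hcdef]; push_cast; ring
  rw [hcast]
  -- membership facts
  have he : MemLp (fun t : ℝ => Complex.exp (Complex.I * (c : ℂ) * t)) ⊤
      (volume : Measure ℝ) := memℒp_exp_I c
  have hen : MemLp (fun t : ℝ => Complex.exp (-(Complex.I * (c : ℂ) * t))) ⊤
      (volume : Measure ℝ) := by
    have h := memℒp_exp_I (-c)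
    have hfe : (fun t : ℝ => Complex.exp (Complex.I * ((-c : ℝ) : ℂ) * t))
        = fun t : ℝ => Complex.exp (-(Complex.I * (c : ℂ) * t)) := by
      funext t; congr 1; push_cast; ring
    rwa [hfe] at h
  have hern : MemLp (fun t : ℝ => Complex.exp (Complex.I * (c : ℂ) * (-t : ℝ))) ⊤
      (volume : Measure ℝ) :=
    he.comp_measurePreserving negMP
  have hae' : MemLp (fun t : ℝ => a t * Complex.exp (-(Complex.I * (c : ℂ) * t))) ⊤
      (volume : Measure ℝ) := by
    have h := hen.smul (p := ⊤) (r := ⊤) ha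
    have hfe : (a • fun t : ℝ => Complex.exp (-(Complex.I * (c : ℂ) * t)))
        = fun t : ℝ => a t * Complex.exp (-(Complex.I * (c : ℂ) * t)) := rfl
    rwa [hfe] at h
  have hbe' : MemLp (fun t : ℝ => b t * Complex.exp (Complex.I * (c : ℂ) * t)) ⊤
      (volume : Measure ℝ) := by
    have h := he.smul (p := ⊤) (r := ⊤) hb
    have hfe : (b • fun t : ℝ => Complex.exp (Complex.I * (c : ℂ) * t))
        = fun t : ℝ => b t * Complex.exp (Complex.I * (c : ℂ) * t) := rfl
    rwa [hfe] at h
  refine ContinuousLinearMap.ext fun φ => ?_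
  apply Subtype.ext
  simp only [ContinuousLinearMap.add_apply, ContinuousLinearMap.comp_apply, W, H,
    Submodule.coe_add, compress_coe]
  rw [W0_exp F c]
  rw [mul_chiPlus_eq_self (translate_mem_pos hcpos φ.2)]
  rw [← W0_exp F c]
  rw [reflect_W0 F he (φ : L2)]
  have h1 : W0 F (fun t : ℝ => a t * Complex.exp (-(Complex.I * (c : ℂ) * t)))
      (W0 F (fun t : ℝ => Complex.exp (Complex.I * (c : ℂ) * t)) (φ : L2))
        = W0 F a (φ : L2) := by
    have hfe : (fun t : ℝ => a t * Complex.exp (-(Complex.I * (c : ℂ) * t)) *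
        Complex.exp (Complex.I * (c : ℂ) * t)) = a := by
      funext t
      have harg : -(Complex.I * (c : ℂ) * t) + Complex.I * (c : ℂ) * t = 0 := by ring
      rw [mul_assoc, ← Complex.exp_add, harg, Complex.exp_zero, mul_one]
    simp only [W0_W0 F hae' he]
    rw [hfe]
  have h3 : W0 F (fun t : ℝ => b t * Complex.exp (Complex.I * (c : ℂ) * t))
      (W0 F (fun t : ℝ => Complex.exp (Complex.I * (c : ℂ) * (-t : ℝ))) (reflect (φ : L2)))
        = W0 F b (reflect (φ : L2)) := by
    have hfe : (fun t : ℝ => b t * Complex.exp (Complex.I * (c : ℂ) * t) *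
        Complex.exp (Complex.I * (c : ℂ) * ((-t : ℝ) : ℂ))) = b := by
      funext t
      have harg : Complex.I * (c : ℂ) * t + Complex.I * (c : ℂ) * ((-t : ℝ) : ℂ) = 0 := by
        push_cast; ring
      rw [mul_assoc, ← Complex.exp_add, harg, Complex.exp_zero, mul_one]
    simp only [W0_W0 F hbe' hern]
    rw [hfe]
  rw [h1, h3]


end WienerHopf
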